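/- Let n ≥ 1 and let x₀ < x₁ < ... < xₙ be points in [-1,1] such that the n-th divided difference satisfies f[x₀,...,xₙ] ≤ 2^(n-1) ‖f‖_∞ for every continuous f : [-1,1] → ℝ. Then the points xⱼ are exactly the Chebyshev extrema, i.e., xⱼ = cos((n-j)π/n) for j = 0,...,n. -/

import Mathlib

open Polynomial Finset

section aux

lemma lag_basis_coeff {n : ℕ} (x : Fin (n+1) → ℝ) (hinj : Function.Injective x) (j : Fin (n+1)) :
    (Lagrange.basis Finset.univ x j).coeff n = ∏ k ∈ Finset.univ.erase j, (x j - x k)⁻¹ := by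
  have hinj' : Set.InjOn x (Finset.univ : Finset (Fin (n+1))) := fun a _ b _ h => hinj h
  have hdeg : (Lagrange.basis Finset.univ x j).natDegree = n := by
    rw [Lagrange.natDegree_basis hinj' (mem_univ j)]; simp
  have h1 := Polynomial.coeff_natDegree (p := Lagrange.basis Finset.univ x j)
  rw [hdeg] at h1
  rw [h1]
  unfold Lagrange.basis
  rw [Polynomial.leadingCoeff_prod]
  refine Finset.prod_congr rfl fun k hk => ?_
  unfold Lagrange.basisDivisor
  rw [leadingCoeff_mul, leadingCoeff_C, (monic_X_sub_C _).leadingCoeff, mul_one]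

lemma divdiff_eq_coeff {n : ℕ} (x : Fin (n+1) → ℝ) (hinj : Function.Injective x)
    (p : ℝ[X]) (hdeg : p.degree < n + 1) :
    ∑ j, (∏ k ∈ Finset.univ.erase j, (x j - x k)⁻¹) * p.eval (x j) = p.coeff n := by
  have hinj' : Set.InjOn x (Finset.univ : Finset (Fin (n+1))) := fun a _ b _ h => hinj h
  have hd : p.degree < (#(univ : Finset (Fin (n+1))) : ℕ) := by
    rw [card_univ, Fintype.card_fin]; exact_mod_cast hdeg
  have hp := Lagrange.eq_interpolate hinj' hd
  conv_rhs => rw [hp]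
  rw [Lagrange.interpolate_apply, Polynomial.finset_sum_coeff]
  refine Finset.sum_congr rfl fun j _ => ?_
  rw [coeff_C_mul, lag_basis_coeff x hinj j, mul_comm]

lemma sign_prod {n : ℕ} (x : Fin (n+1) → ℝ) (hx : StrictMono x) (j : Fin (n+1)) :
    ∏ k ∈ Finset.univ.erase j, (x j - x k)⁻¹
      = (-1:ℝ)^((j:ℕ)+n) * ∏ k ∈ Finset.univ.erase j, |x k - x j|⁻¹ := by
  have step : ∀ k ∈ Finset.univ.erase j, (x j - x k)⁻¹
      = (if j < k then (-1:ℝ) else 1) * |x k - x j|⁻¹ := by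
    intro k hk
    have hne : k ≠ j := (Finset.mem_erase.mp hk).1
    rcases lt_or_gt_of_ne hne with hlt | hgt
    · have : x k < x j := hx hlt
      rw [if_neg (not_lt_of_gt hlt), one_mul, abs_of_neg (by linarith), neg_sub]
    · have : x j < x k := hx hgt
      rw [if_pos hgt, abs_of_pos (by linarith), neg_one_mul, ← inv_neg, neg_sub]
  rw [Finset.prod_congr rfl step, Finset.prod_mul_distrib]
  congr 1
  rw [Finset.prod_ite, Finset.prod_const, Finset.prod_const, one_pow, mul_one]
  have hfil : (Finset.univ.erase j).filter (fun k => j < k) = Finset.Ioi j := by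
    ext k
    simp only [Finset.mem_filter, Finset.mem_erase, Finset.mem_univ, Finset.mem_Ioi, true_and,
      and_true]
    exact ⟨fun h => h.2, fun h => ⟨h.ne', h⟩⟩
  rw [hfil, Fin.card_Ioi]
  have hj : (j : ℕ) ≤ n := Fin.is_le j
  have : (n + 1 - 1 - (j:ℕ)) + ((j:ℕ) + n) = 2 * n := by omega
  have h2 : ((-1:ℝ))^((n + 1 - 1 - (j:ℕ)) + ((j:ℕ) + n)) = 1 := by
    rw [this]; exact Even.neg_one_pow ⟨n, by ring⟩
  rw [pow_add] at h2
  rcases neg_one_pow_eq_or ℝ (n + 1 - 1 - (j:ℕ)) with h1 | h1 <;>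
    rcases neg_one_pow_eq_or ℝ ((j:ℕ) + n) with h3 | h3 <;>
      rw [h1, h3] at h2 ⊢ <;> norm_num at h2

lemma cheb_deg_coeff : ∀ m : ℕ,
    (Polynomial.Chebyshev.T ℝ m).degree ≤ (m : ℕ) ∧
    (Polynomial.Chebyshev.T ℝ (m+1)).degree ≤ ((m+1 : ℕ) : WithBot ℕ) ∧
    (Polynomial.Chebyshev.T ℝ (m+1)).coeff (m+1) = 2^m := by
  intro m
  have h2C : (2 : ℝ[X]) = Polynomial.C 2 := (map_ofNat Polynomial.C 2).symm
  induction m with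
  | zero =>
    refine ⟨?_, ?_, ?_⟩
    · rw [show ((0:ℕ):ℤ) = 0 from rfl, Polynomial.Chebyshev.T_zero]
      simpa using Polynomial.degree_one_le
    · norm_num [Polynomial.Chebyshev.T_one, Polynomial.degree_X]
    · norm_num [Polynomial.Chebyshev.T_one, Polynomial.coeff_X]
  | succ m ih =>
    obtain ⟨hd0, hd1, hc⟩ := ih
    have hrec : Polynomial.Chebyshev.T ℝ ((m:ℤ)+1+1) =
        2 * Polynomial.X * Polynomial.Chebyshev.T ℝ ((m:ℤ)+1) - Polynomial.Chebyshev.T ℝ m := by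
      have := Polynomial.Chebyshev.T_add_two ℝ (m : ℤ)
      convert this using 2
      ring
    have hcast : ((m+1 : ℕ) : ℤ) = (m:ℤ) + 1 := by push_cast; ring
    have hidx : ((m+1:ℕ):ℤ) + 1 = (m:ℤ)+1+1 := by push_cast; ring
    have hprod : (2 * Polynomial.X * Polynomial.Chebyshev.T ℝ ((m:ℤ)+1))
        = Polynomial.C 2 * (Polynomial.X * Polynomial.Chebyshev.T ℝ ((m:ℤ)+1)) := by
      rw [h2C, mul_assoc]
    have hdegprod : (2 * Polynomial.X * Polynomial.Chebyshev.T ℝ ((m:ℤ)+1)).degree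
        ≤ ((m+1+1 : ℕ) : WithBot ℕ) := by
      rw [hprod]
      refine le_trans (Polynomial.degree_mul_le _ _) ?_
      refine le_trans (add_le_add Polynomial.degree_C_le (Polynomial.degree_mul_le _ _)) ?_
      rw [Polynomial.degree_X, zero_add]
      calc (1 : WithBot ℕ) + (Polynomial.Chebyshev.T ℝ ((m:ℤ)+1)).degree
          ≤ (1 : WithBot ℕ) + ((m+1:ℕ) : WithBot ℕ) := add_le_add_right hd1 _
        _ = ((m+1+1 : ℕ) : WithBot ℕ) := by norm_cast; omega
    refine ⟨by rw [hcast]; exact hd1, ?_, ?_⟩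
    · rw [hidx, hrec]
      refine le_trans (Polynomial.degree_sub_le _ _) (max_le hdegprod ?_)
      refine le_trans hd0 ?_
      exact_mod_cast Nat.cast_le.mpr (by omega : m ≤ m + 1 + 1)
    · rw [hidx, hrec, Polynomial.coeff_sub]
      have hz : (Polynomial.Chebyshev.T ℝ m).coeff (m+1+1) = 0 :=
        Polynomial.coeff_eq_zero_of_degree_lt
          (lt_of_le_of_lt hd0 (by exact_mod_cast Nat.cast_lt.mpr (by omega : m < m + 1 + 1)))
      have h2X : (2 * Polynomial.X * Polynomial.Chebyshev.T ℝ ((m:ℤ)+1)).coeff (m+1+1)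
          = 2 * (Polynomial.Chebyshev.T ℝ ((m:ℤ)+1)).coeff (m+1) := by
        rw [hprod, Polynomial.coeff_C_mul, Polynomial.coeff_X_mul]
      rw [h2X, hz, sub_zero]
      rw [← hcast] at hc ⊢
      rw [hc]; ring

lemma strictmono_fin_int {N : ℕ} (u : Fin (N+1) → ℤ) (hu : StrictMono u) :
    ∀ j : Fin (N+1), u 0 + (j : ℕ) ≤ u j := by
  intro j
  induction j using Fin.induction with
  | zero => simp
  | succ i ih =>
    have h1 : u i.castSucc < u i.succ := hu Fin.castSucc_lt_succ
    have h2 : ((i.succ : Fin (N+1)) : ℕ) = ((i.castSucc : Fin (N+1)) : ℕ) + 1 := by simp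
    rw [h2]
    push_cast
    omega

end aux

theorem divided_difference_minimal_nodes_unique (n : ℕ) (hn : 1 ≤ n)
    (x : Fin (n + 1) → ℝ) (hx : StrictMono x) (hmem : ∀ j, x j ∈ Set.Icc (-1 : ℝ) 1)
    (h : ∀ f : C(Set.Icc (-1 : ℝ) 1, ℝ),
      ∑ j : Fin (n + 1), (-1 : ℝ) ^ ((j : ℕ) + n) *
        (∏ k ∈ Finset.univ.erase j, |x k - x j|⁻¹) * f ⟨x j, hmem j⟩ ≤ 2 ^ (n - 1) * ‖f‖) :
    ∀ j : Fin (n + 1), x j = Real.cos (((n - (j : ℕ) : ℕ) : ℝ) * Real.pi / n) := by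
  have hinj : Function.Injective x := hx.injective
  have hinj' : Set.InjOn x (Finset.univ : Finset (Fin (n+1))) := fun a _ b _ hab => hinj hab
  have hπ := Real.pi_pos
  have hwpos : ∀ j : Fin (n+1), 0 < ∏ k ∈ Finset.univ.erase j, |x k - x j|⁻¹ := by
    intro j
    refine Finset.prod_pos fun k hk => ?_
    have hne : x k ≠ x j := fun hkj => (Finset.mem_erase.mp hk).1 (hinj hkj)
    exact inv_pos.mpr (abs_pos.mpr (sub_ne_zero.mpr hne))
  have hsq : ∀ m : ℕ, ((-1:ℝ)^m) * ((-1:ℝ)^m) = 1 := by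
    intro m; rcases neg_one_pow_eq_or ℝ m with h1 | h1 <;> rw [h1] <;> norm_num
  have h2pos : (0:ℝ) < 2^(n-1) := by positivity
  -- Step 1 : sum of weights is at most 2^(n-1)
  set g : ℝ[X] := Lagrange.interpolate Finset.univ x (fun j => (-1:ℝ)^((j:ℕ)+n)) with hgdef
  have hFcont : Continuous (fun t : Set.Icc (-1:ℝ) 1 => max (-1) (min 1 (g.eval (t:ℝ)))) :=
    continuous_const.max (continuous_const.min ((g.continuous).comp continuous_subtype_val))
  set F : C(Set.Icc (-1:ℝ) 1, ℝ) := ⟨_, hFcont⟩ with hFdef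
  have hgj : ∀ j, g.eval (x j) = (-1:ℝ)^((j:ℕ)+n) := by
    intro j
    rw [hgdef]
    exact Lagrange.eval_interpolate_at_node _ hinj' (Finset.mem_univ j)
  have hFval : ∀ j, F ⟨x j, hmem j⟩ = (-1:ℝ)^((j:ℕ)+n) := by
    intro j
    show max (-1) (min 1 (g.eval (x j))) = _
    rw [hgj j]
    rcases neg_one_pow_eq_or ℝ ((j:ℕ)+n) with h1 | h1 <;> rw [h1] <;> norm_num
  have hFnorm : ‖F‖ ≤ 1 := by
    refine (ContinuousMap.norm_le _ zero_le_one).mpr fun t => ?_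
    show ‖max (-1) (min 1 (g.eval (t:ℝ)))‖ ≤ 1
    rw [Real.norm_eq_abs]
    exact abs_le.mpr ⟨le_max_left _ _, max_le (by norm_num) (min_le_left _ _)⟩
  have hsum : ∑ j : Fin (n+1), (∏ k ∈ Finset.univ.erase j, |x k - x j|⁻¹) ≤ 2^(n-1) := by
    have h1 := h F
    have h2 : ∑ j : Fin (n+1), (-1:ℝ)^((j:ℕ)+n) *
        (∏ k ∈ Finset.univ.erase j, |x k - x j|⁻¹) * F ⟨x j, hmem j⟩
        = ∑ j : Fin (n+1), (∏ k ∈ Finset.univ.erase j, |x k - x j|⁻¹) := by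
      refine Finset.sum_congr rfl fun j _ => ?_
      rw [hFval j]
      calc (-1:ℝ)^((j:ℕ)+n) * (∏ k ∈ Finset.univ.erase j, |x k - x j|⁻¹) * (-1)^((j:ℕ)+n)
          = (∏ k ∈ Finset.univ.erase j, |x k - x j|⁻¹) *
            (((-1:ℝ)^((j:ℕ)+n)) * ((-1:ℝ)^((j:ℕ)+n))) := by ring
        _ = _ := by rw [hsq]; ring
    rw [h2] at h1
    refine le_trans h1 ?_
    nlinarith [hFnorm, h2pos]
  -- Step 2 : the normalized Chebyshev polynomial
  obtain ⟨hTdeg, -, -⟩ := cheb_deg_coeff n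
  have hco : (Polynomial.Chebyshev.T ℝ n).coeff n = 2^(n-1) := by
    obtain ⟨-, -, h3⟩ := cheb_deg_coeff (n-1)
    have hn1 : n - 1 + 1 = n := by omega
    have hz : ((n-1:ℕ):ℤ) + 1 = (n:ℤ) := by push_cast [hn1]; omega
    rw [hz, hn1] at h3
    exact h3
  set p : ℝ[X] := Polynomial.C ((2:ℝ)^(n-1))⁻¹ * Polynomial.Chebyshev.T ℝ n with hpdef
  have hpdeg : p.degree < (n:WithBot ℕ) + 1 := by
    have hle : p.degree ≤ (n : ℕ) := by
      refine le_trans (Polynomial.degree_mul_le _ _) ?_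
      refine le_trans (add_le_add Polynomial.degree_C_le hTdeg) ?_
      rw [zero_add]
    refine lt_of_le_of_lt hle ?_
    exact_mod_cast Nat.cast_lt.mpr (Nat.lt_succ_self n)
  have hpcoeff : p.coeff n = 1 := by
    rw [hpdef, Polynomial.coeff_C_mul, hco]
    field_simp
  have hdd : ∑ j : Fin (n+1), (∏ k ∈ Finset.univ.erase j, (x j - x k)⁻¹) * p.eval (x j) = 1 := by
    rw [divdiff_eq_coeff x hinj p hpdeg, hpcoeff]
  have hTabs : ∀ j, |(Polynomial.Chebyshev.T ℝ n).eval (x j)| ≤ 1 := by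
    intro j
    obtain ⟨h1, h2⟩ := hmem j
    have hxj : Real.cos (Real.arccos (x j)) = x j := Real.cos_arccos h1 h2
    rw [← hxj, Polynomial.Chebyshev.T_real_cos]
    exact Real.abs_cos_le_one _
  have hpev : ∀ j, p.eval (x j)
      = ((2:ℝ)^(n-1))⁻¹ * (Polynomial.Chebyshev.T ℝ n).eval (x j) := by
    intro j; rw [hpdef]; simp
  have hpabs : ∀ j, |p.eval (x j)| ≤ ((2:ℝ)^(n-1))⁻¹ := by
    intro j
    rw [hpev j, abs_mul, abs_of_pos (inv_pos.mpr h2pos)]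
    nlinarith [hTabs j, inv_pos.mpr h2pos]
  have tle : ∀ j : Fin (n+1), (-1:ℝ)^((j:ℕ)+n) *
      (∏ k ∈ Finset.univ.erase j, |x k - x j|⁻¹) * p.eval (x j)
      ≤ (∏ k ∈ Finset.univ.erase j, |x k - x j|⁻¹) * ((2:ℝ)^(n-1))⁻¹ := by
    intro j
    refine le_trans (le_abs_self _) ?_
    rw [abs_mul, abs_mul, abs_pow, abs_neg, abs_one, one_pow, one_mul,
      abs_of_pos (hwpos j)]
    exact mul_le_mul_of_nonneg_left (hpabs j) (le_of_lt (hwpos j))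
  have hsum1 : ∑ j : Fin (n+1), (-1:ℝ)^((j:ℕ)+n) *
      (∏ k ∈ Finset.univ.erase j, |x k - x j|⁻¹) * p.eval (x j) = 1 := by
    have hcg : ∑ j : Fin (n+1), (-1:ℝ)^((j:ℕ)+n) *
        (∏ k ∈ Finset.univ.erase j, |x k - x j|⁻¹) * p.eval (x j)
        = ∑ j : Fin (n+1), (∏ k ∈ Finset.univ.erase j, (x j - x k)⁻¹) * p.eval (x j) :=
      Finset.sum_congr rfl fun j _ => by rw [sign_prod x hx j]
    rw [hcg, hdd]
  have hsumu : ∑ j : Fin (n+1),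
      (∏ k ∈ Finset.univ.erase j, |x k - x j|⁻¹) * ((2:ℝ)^(n-1))⁻¹ ≤ 1 := by
    rw [← Finset.sum_mul]
    calc (∑ j : Fin (n+1), ∏ k ∈ Finset.univ.erase j, |x k - x j|⁻¹) * ((2:ℝ)^(n-1))⁻¹
        ≤ 2^(n-1) * ((2:ℝ)^(n-1))⁻¹ :=
          mul_le_mul_of_nonneg_right hsum (le_of_lt (inv_pos.mpr h2pos))
      _ = 1 := mul_inv_cancel₀ (ne_of_gt h2pos)
  have hkey : ∀ j : Fin (n+1), (-1:ℝ)^((j:ℕ)+n) *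
      (∏ k ∈ Finset.univ.erase j, |x k - x j|⁻¹) * p.eval (x j)
      = (∏ k ∈ Finset.univ.erase j, |x k - x j|⁻¹) * ((2:ℝ)^(n-1))⁻¹ := by
    by_contra hcon
    push_neg at hcon
    obtain ⟨j0, hj0⟩ := hcon
    have hstrict := Finset.sum_lt_sum (fun j (_ : j ∈ Finset.univ) => tle j)
      ⟨j0, Finset.mem_univ j0, lt_of_le_of_ne (tle j0) hj0⟩
    rw [hsum1] at hstrict
    linarith
  -- extract |T_n(x j)| = 1
  have hTone : ∀ j, |(Polynomial.Chebyshev.T ℝ n).eval (x j)| = 1 := by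
    intro j
    have hk := hkey j
    have hw := hwpos j
    have hcancel : (-1:ℝ)^((j:ℕ)+n) * p.eval (x j) = ((2:ℝ)^(n-1))⁻¹ := by
      have := mul_left_cancel₀ (ne_of_gt hw)
        (show (∏ k ∈ Finset.univ.erase j, |x k - x j|⁻¹) * ((-1:ℝ)^((j:ℕ)+n) * p.eval (x j))
            = (∏ k ∈ Finset.univ.erase j, |x k - x j|⁻¹) * ((2:ℝ)^(n-1))⁻¹ by
          rw [← hk]; ring)
      exact this
    have habs : |p.eval (x j)| = ((2:ℝ)^(n-1))⁻¹ := by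
      have := congrArg abs hcancel
      rwa [abs_mul, abs_pow, abs_neg, abs_one, one_pow, one_mul,
        abs_of_pos (inv_pos.mpr h2pos)] at this
    have habs2 : ((2:ℝ)^(n-1))⁻¹ * |(Polynomial.Chebyshev.T ℝ n).eval (x j)|
        = ((2:ℝ)^(n-1))⁻¹ * 1 := by
      rw [mul_one]
      calc ((2:ℝ)^(n-1))⁻¹ * |(Polynomial.Chebyshev.T ℝ n).eval (x j)|
          = |p.eval (x j)| := by rw [hpev j, abs_mul, abs_of_pos (inv_pos.mpr h2pos)]
        _ = ((2:ℝ)^(n-1))⁻¹ := habs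
    exact mul_left_cancel₀ (ne_of_gt (inv_pos.mpr h2pos)) habs2
  -- Step 3 : pin down the points
  intro j
  have hθmem : ∀ i : Fin (n+1), Real.cos (Real.arccos (x i)) = x i := fun i =>
    Real.cos_arccos (hmem i).1 (hmem i).2
  have hcos1 : ∀ i, |Real.cos ((n:ℝ) * Real.arccos (x i))| = 1 := by
    intro i
    have := hTone i
    rw [← hθmem i, Polynomial.Chebyshev.T_real_cos] at this
    have hcast : ((n:ℕ):ℝ) = (((n:ℕ):ℤ):ℝ) := by push_cast; ring
    rw [hcast]
    exact this
  have hsin0 : ∀ i, Real.sin ((n:ℝ) * Real.arccos (x i)) = 0 := by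
    intro i
    rcases (abs_eq (by norm_num : (0:ℝ) ≤ 1)).mp (hcos1 i) with h1 | h1 <;>
      [exact Real.sin_eq_zero_iff_cos_eq.mpr (Or.inl h1);
       exact Real.sin_eq_zero_iff_cos_eq.mpr (Or.inr h1)]
  choose m hm using fun i => Real.sin_eq_zero_iff.mp (hsin0 i)
  have hθ0 : ∀ i, 0 ≤ Real.arccos (x i) := fun i => Real.arccos_nonneg _
  have hθπ : ∀ i, Real.arccos (x i) ≤ Real.pi := fun i => Real.arccos_le_pi _
  have hnpos : (0:ℝ) < n := by exact_mod_cast hn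
  have hmb : ∀ i, 0 ≤ m i ∧ m i ≤ n := by
    intro i
    constructor
    · have : (0:ℝ) ≤ (m i : ℝ) := by
        nlinarith [hm i, hθ0 i, hπ, hnpos]
      exact_mod_cast this
    · have : (m i : ℝ) ≤ (n:ℝ) := by
        nlinarith [hm i, hθπ i, hπ, hnpos]
      exact_mod_cast this
  have hmanti : StrictAnti m := by
    intro a b hab
    have hθlt : Real.arccos (x b) < Real.arccos (x a) :=
      Real.strictAntiOn_arccos (hmem a) (hmem b) (hx hab)
    have : (m b : ℝ) * Real.pi < (m a : ℝ) * Real.pi := by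
      rw [hm a, hm b]
      nlinarith [hnpos]
    have := (mul_lt_mul_iff_left₀ hπ).mp this
    exact_mod_cast this
  -- m i = n - i
  have hub : ∀ i : Fin (n+1), m i ≤ (n:ℤ) - (i:ℕ) := by
    intro i
    have := strictmono_fin_int (fun k => -(m k)) (fun a b hab => by
      simpa using hmanti hab) i
    have h0 : m 0 ≤ n := (hmb 0).2
    omega
  have hlb : ∀ i : Fin (n+1), (n:ℤ) - (i:ℕ) ≤ m i := by
    intro i
    have hv : StrictMono (fun k : Fin (n+1) => m k.rev) := by
      intro a b hab
      exact hmanti (Fin.rev_lt_rev.mpr hab)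
    have := strictmono_fin_int _ hv i.rev
    simp only [Fin.rev_rev] at this
    have h0 : 0 ≤ m (Fin.rev 0) := (hmb _).1
    have hrv : ((i.rev : Fin (n+1)) : ℕ) = n - (i:ℕ) := by
      simp [Fin.val_rev]
    have hi : (i:ℕ) ≤ n := Fin.is_le i
    rw [hrv] at this
    omega
  have hmi : (m j : ℝ) = (n:ℝ) - (j:ℕ) := by
    have h1 := hub j
    have h2 := hlb j
    have : m j = (n:ℤ) - (j:ℕ) := le_antisymm h1 h2
    rw [this]
    push_cast
    ring
  -- conclude
  have hθeq : Real.arccos (x j) = (((n - (j:ℕ) : ℕ)):ℝ) * Real.pi / n := by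
    have hmj := hm j
    rw [hmi] at hmj
    have hcast : (((n - (j:ℕ) : ℕ)):ℝ) = (n:ℝ) - (j:ℕ) := by
      have : (j:ℕ) ≤ n := Fin.is_le j
      push_cast [this]
      ring
    rw [hcast]
    field_simp
    linarith [hmj]
  rw [← hθmem j, hθeq]
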